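/- arXiv:2008.09109 — 5 statements merged into one kernel-verified Lean document; each statement's English description precedes it below -/
import Mathlib

section
/- For the six-dimensional COVID-19 ODE system, the nonnegative orthant ℝ₊⁶ is positively invariant: if (S_u, S_a, E, I, J, R) : ℝ → ℝ⁶ is a solution of the system with nonnegative initial conditions S_u(0), S_a(0), E(0), I(0), J(0), R(0) ≥ 0, then S_u(t), S_a(t), E(t), I(t), J(t), R(t) ≥ 0 for all t ≥ 0. -/
open Set Filter Topology Real

private lemma covid_est_Su (Pi β ν α θ μ κ c sa i j n : ℝ)
    (hβ : 0 < β) (hν : 0 < ν) (hν1 : ν < 1) (hα : 0 < α) (hθ : 0 < θ) (hμ : 0 < μ)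
    (hPi : 0 < Pi) (hκ : 0 ≤ κ) (hn : 0 < n) (hc : 0 < c)
    (hsa₁ : -c ≤ sa) (hi₁ : -c ≤ i) (hj₁ : -c ≤ j)
    (hsa₂ : sa ≤ κ * n)
    (hcn : c ≤ κ * n) {su : ℝ} (hsu : su = -c) :
    -((2*β*κ + α*κ + θ) * c) ≤ Pi - β * (i + ν * j) * su / n - α * sa * su / n - μ * su + θ * sa := by
  subst hsu
  have h1 : β * (i + ν * j) * (-c) / n ≤ 2*β*κ*c := by
    rw [div_le_iff₀ hn]
    nlinarith [mul_nonneg hν.le (by linarith : (0:ℝ) ≤ j + c),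
      mul_nonneg (mul_nonneg (mul_nonneg hβ.le hc.le) two_pos.le) (by linarith : (0:ℝ) ≤ κ * n - c),
      mul_nonneg (mul_nonneg hβ.le hc.le) (by nlinarith [mul_nonneg hν.le (by linarith : (0:ℝ) ≤ j + c)] : (0:ℝ) ≤ i + ν * j + 2*c)]
  have h2 : α * sa * (-c) / n ≤ α*κ*c := by
    rw [div_le_iff₀ hn]
    nlinarith [mul_nonneg (mul_nonneg hα.le hc.le) (by linarith : (0:ℝ) ≤ sa + c),
      mul_nonneg (mul_nonneg hα.le hc.le) (by linarith : (0:ℝ) ≤ κ * n - c)]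
  nlinarith [mul_nonneg hθ.le (by linarith : (0:ℝ) ≤ sa + c), mul_pos hμ hc]

private lemma covid_est_Sa (β ν α θ μ ε' κ c su i j n : ℝ)
    (hβ : 0 < β) (hν : 0 < ν) (hν1 : ν < 1) (hα : 0 < α) (hθ : 0 < θ) (hμ : 0 < μ)
    (hε : 0 < ε') (hε1 : ε' < 1) (hκ : 0 ≤ κ) (hn : 0 < n) (hc : 0 < c)
    (hi₁ : -c ≤ i) (hj₁ : -c ≤ j) (hsu₂ : su ≤ κ * n)
    (hcn : c ≤ κ * n) {sa : ℝ} (hsa : sa = -c) :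
    -((α*κ + 2*β*κ) * c) ≤ α * sa * su / n - ε' * β * (i + ν * j) * sa / n - (μ + θ) * sa := by
  subst hsa
  have h1 : -(α*κ*c) ≤ α * (-c) * su / n := by
    rw [le_div_iff₀ hn]
    nlinarith [mul_nonneg (mul_nonneg hα.le hc.le) (by linarith : (0:ℝ) ≤ κ * n - su)]
  have h2 : ε' * β * (i + ν * j) * (-c) / n ≤ 2*β*κ*c := by
    rw [div_le_iff₀ hn]
    have hv : (0:ℝ) ≤ i + ν * j + 2*c := by
      nlinarith [mul_nonneg hν.le (by linarith : (0:ℝ) ≤ j + c)]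
    nlinarith [mul_nonneg (mul_nonneg (mul_nonneg hε.le hβ.le) hc.le) hv,
      mul_nonneg (mul_nonneg (mul_nonneg (by linarith : (0:ℝ) ≤ 1 - ε') hβ.le) hc.le) hc.le,
      mul_nonneg (mul_nonneg hβ.le hc.le) (by linarith : (0:ℝ) ≤ κ * n - c)]
  nlinarith [mul_pos (by linarith : (0:ℝ) < μ + θ) hc]

private lemma covid_est_E (β ν γ μ ε' κ c su sa i j n : ℝ)
    (hβ : 0 < β) (hν : 0 < ν) (hν1 : ν < 1) (hγ : 0 < γ) (hμ : 0 < μ)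
    (hε : 0 < ε') (hε1 : ε' < 1) (hκ : 0 ≤ κ) (hn : 0 < n) (hc : 0 < c)
    (hsu₁ : -c ≤ su) (hsa₁ : -c ≤ sa) (hi₁ : -c ≤ i) (hj₁ : -c ≤ j)
    (hsu₂ : su ≤ κ * n) (hsa₂ : sa ≤ κ * n) (hi₂ : i ≤ κ * n) (hj₂ : j ≤ κ * n)
    (hcn : c ≤ κ * n) {e : ℝ} (he : e = -c) :
    -(12*β*κ*c) ≤ β * (i + ν * j) * (su + ε' * sa) / n - (γ + μ) * e := by
  subst he
  have hkn : 0 ≤ κ * n := le_trans hc.le hcn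
  have hv₁ : -(2*c) ≤ i + ν * j := by nlinarith [mul_nonneg hν.le (by linarith : (0:ℝ) ≤ j + c)]
  have hv₂ : i + ν * j ≤ 2*(κ*n) := by nlinarith [mul_nonneg hν.le (by linarith : (0:ℝ) ≤ κ*n - j)]
  have hw₁ : -(2*c) ≤ su + ε' * sa := by nlinarith [mul_nonneg hε.le (by linarith : (0:ℝ) ≤ sa + c)]
  have hw₂ : su + ε' * sa ≤ 2*(κ*n) := by nlinarith [mul_nonneg hε.le (by linarith : (0:ℝ) ≤ κ*n - sa)]
  have key : -(12*κ*c) ≤ (i + ν * j) * (su + ε' * sa) / n := by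
    rw [le_div_iff₀ hn]
    nlinarith [mul_nonneg (by linarith : (0:ℝ) ≤ i + ν * j + 2*c) (by linarith : (0:ℝ) ≤ su + ε' * sa + 2*c),
      mul_nonneg hc.le (by linarith : (0:ℝ) ≤ 2*(κ*n) - (i + ν*j)),
      mul_nonneg hc.le (by linarith : (0:ℝ) ≤ 2*(κ*n) - (su + ε'*sa)),
      mul_nonneg hc.le (by linarith : (0:ℝ) ≤ κ*n - c)]
  have h3 : β * ((i + ν * j) * (su + ε' * sa) / n) ≥ β * (-(12*κ*c)) :=
    mul_le_mul_of_nonneg_left key hβ.le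
  have heq : β * (i + ν * j) * (su + ε' * sa) / n = β * ((i + ν * j) * (su + ε' * sa) / n) := by
    ring
  nlinarith [mul_pos (by linarith : (0:ℝ) < γ + μ) hc]

private lemma covid_est_I (γ p η σ₁ μ δ₁ c e : ℝ)
    (hγ : 0 < γ) (hp : 0 < p) (hp1 : p < 1) (hη : 0 < η) (hσ₁ : 0 < σ₁)
    (hμ : 0 < μ) (hδ₁ : 0 < δ₁) (hc : 0 < c) (he : -c ≤ e) {i : ℝ} (hi : i = -c) :
    -(γ * c) ≤ (1 - p) * γ * e - (η + σ₁ + μ + δ₁) * i := by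
  subst hi
  nlinarith [mul_nonneg (mul_nonneg (by linarith : (0:ℝ) ≤ 1 - p) hγ.le) (by linarith : (0:ℝ) ≤ e + c),
    mul_nonneg (mul_nonneg hp.le hγ.le) hc.le,
    mul_pos (by linarith : (0:ℝ) < η + σ₁ + μ + δ₁) hc]

private lemma covid_est_J (γ p η σ₂ μ δ₂ c e i : ℝ)
    (hγ : 0 < γ) (hp : 0 < p) (hp1 : p < 1) (hη : 0 < η) (hσ₂ : 0 < σ₂)
    (hμ : 0 < μ) (hδ₂ : 0 < δ₂) (hc : 0 < c) (he : -c ≤ e) (hi : -c ≤ i) {j : ℝ} (hj : j = -c) :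
    -((γ + η) * c) ≤ p * γ * e + η * i - (σ₂ + μ + δ₂) * j := by
  subst hj
  nlinarith [mul_nonneg (mul_nonneg hp.le hγ.le) (by linarith : (0:ℝ) ≤ e + c),
    mul_nonneg (mul_nonneg (by linarith : (0:ℝ) ≤ 1 - p) hγ.le) hc.le,
    mul_nonneg hη.le (by linarith : (0:ℝ) ≤ i + c),
    mul_pos (by linarith : (0:ℝ) < σ₂ + μ + δ₂) hc]

private lemma covid_est_R (σ₁ σ₂ μ c i j : ℝ)
    (hσ₁ : 0 < σ₁) (hσ₂ : 0 < σ₂) (hμ : 0 < μ) (hc : 0 < c)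
    (hi : -c ≤ i) (hj : -c ≤ j) {r : ℝ} (hr : r = -c) :
    -((σ₁ + σ₂) * c) ≤ σ₁ * i + σ₂ * j - μ * r := by
  subst hr
  nlinarith [mul_nonneg hσ₁.le (by linarith : (0:ℝ) ≤ i + c),
    mul_nonneg hσ₂.le (by linarith : (0:ℝ) ≤ j + c), mul_pos hμ hc]

private lemma covid_no_contact (f : ℝ → ℝ) (a t₁ d : ℝ) (hat : a < t₁)
    (hf : HasDerivAt f d t₁) (hft : f t₁ = 0) (hnn : ∀ u ∈ Set.Icc a t₁, 0 ≤ f u)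
    (hd : 0 < d) : False := by
  have hslope := hasDerivAt_iff_tendsto_slope.mp hf
  have h2 : Tendsto (slope f t₁) (𝓝[<] t₁) (𝓝 d) :=
    hslope.mono_left (nhdsWithin_mono _ (fun x hx => ne_of_lt hx))
  have hev : ∀ᶠ u in 𝓝[<] t₁, slope f t₁ u ≤ 0 := by
    filter_upwards [Ioo_mem_nhdsLT_of_mem (Set.mem_Ioc.mpr ⟨hat, le_refl t₁⟩)] with u hu
    have h0 : 0 ≤ f u := hnn u ⟨hu.1.le, hu.2.le⟩
    have h3 : u - t₁ < 0 := by linarith [hu.2]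
    rw [slope_def_field, hft]
    exact div_nonpos_iff.mpr (Or.inl ⟨by linarith, by linarith⟩)
  have : d ≤ 0 := le_of_tendsto h2 hev
  linarith

private lemma covid_sup_mem (g : Fin 6 → ℝ → ℝ) (hg : ∀ i, Continuous (g i)) (a b : ℝ)
    (hab : a ≤ b) (h0 : ∀ i, 0 ≤ g i a) :
    sSup {s | s ∈ Set.Icc a b ∧ ∀ u ∈ Set.Icc a s, ∀ i, 0 ≤ g i u} ∈
      {s | s ∈ Set.Icc a b ∧ ∀ u ∈ Set.Icc a s, ∀ i, 0 ≤ g i u} := by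
  set A := {s | s ∈ Set.Icc a b ∧ ∀ u ∈ Set.Icc a s, ∀ i, 0 ≤ g i u} with hA
  have hA0 : a ∈ A := by
    refine ⟨⟨le_refl a, hab⟩, fun u hu i => ?_⟩
    have : u = a := le_antisymm hu.2 hu.1
    rw [this]; exact h0 i
  have hne : A.Nonempty := ⟨a, hA0⟩
  have hbdd : BddAbove A := ⟨b, fun s hs => hs.1.2⟩
  set t₁ := sSup A with ht₁
  have hat : a ≤ t₁ := le_csSup hbdd hA0
  have htb : t₁ ≤ b := csSup_le hne (fun s hs => hs.1.2)
  have hlt : ∀ u, a ≤ u → u < t₁ → ∀ i, 0 ≤ g i u := by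
    intro u hau hut i
    obtain ⟨s, hsA, hus⟩ := exists_lt_of_lt_csSup hne hut
    exact hsA.2 u ⟨hau, hus.le⟩ i
  refine ⟨⟨hat, htb⟩, fun u hu i => ?_⟩
  rcases lt_or_eq_of_le hu.2 with h | h
  · exact hlt u hu.1 h i
  · rw [h]
    rcases eq_or_lt_of_le hat with h' | h'
    · rw [← h']; exact h0 i
    · have tends : Tendsto (g i) (𝓝[<] t₁) (𝓝 (g i t₁)) :=
        ((hg i).tendsto t₁).mono_left nhdsWithin_le_nhds
      refine ge_of_tendsto tends ?_
      filter_upwards [Ioo_mem_nhdsLT_of_mem (Set.mem_Ioc.mpr ⟨h', le_refl t₁⟩)] with x hx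
      exact hlt x hx.1.le hx.2 i

private lemma covid_barrier_local (X D : Fin 6 → ℝ → ℝ)
    (hX : ∀ i t, HasDerivAt (X i) (D i t) t)
    (K a δ : ℝ) (hδ : 0 < δ)
    (h0 : ∀ i, 0 ≤ X i a)
    (hest : ∀ s ∈ Set.Ioc a (a + δ), ∀ c, 0 < c → (∀ k, -c ≤ X k s) →
      ∀ i, X i s = -c → -(K * c) < D i s) :
    ∀ s ∈ Set.Icc a (a + δ), ∀ i, 0 ≤ X i s := by
  have hcont : ∀ i, Continuous (X i) := fun i =>
    Differentiable.continuous (fun t => (hX i t).differentiableAt)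
  have claim : ∀ εb, 0 < εb → ∀ s ∈ Set.Icc a (a + δ), ∀ i,
      -(εb * Real.exp (K * (s - a))) ≤ X i s := by
    intro εb hεb
    set g : Fin 6 → ℝ → ℝ := fun i u => X i u + εb * Real.exp (K * (u - a)) with hg
    have hgc : ∀ i, Continuous (g i) := fun i => ((hcont i).add (by fun_prop))
    have hg0 : ∀ i, 0 ≤ g i a := by
      intro i
      have h2 : g i a = X i a + εb * Real.exp (K * (a - a)) := rfl
      rw [h2]
      have h3 := h0 i
      have h1 : (0:ℝ) < εb * Real.exp (K * (a - a)) := by positivity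
      linarith
    have hsup := covid_sup_mem g hgc a (a + δ) (by linarith) hg0
    set A := {s | s ∈ Set.Icc a (a + δ) ∧ ∀ u ∈ Set.Icc a s, ∀ i, 0 ≤ g i u} with hA
    set t₁ := sSup A with ht₁def
    obtain ⟨⟨hat, htb⟩, hmem⟩ := hsup
    have hbdd : BddAbove A := ⟨a + δ, fun s hs => hs.1.2⟩
    have ht1 : t₁ = a + δ := by
      by_contra hne
      have htlt : t₁ < a + δ := lt_of_le_of_ne htb hne
      by_cases hstrict : ∀ i, 0 < g i t₁
      · have hev : ∀ᶠ u in 𝓝 t₁, ∀ i, 0 < g i u :=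
          eventually_all.mpr (fun i =>
            ((hgc i).tendsto t₁).eventually (eventually_gt_nhds (hstrict i)))
        rw [Metric.eventually_nhds_iff] at hev
        obtain ⟨ρ, hρ, hball⟩ := hev
        set t₂ := min (t₁ + ρ/2) (a + δ) with ht₂
        have ht₂gt : t₁ < t₂ := lt_min (by linarith) htlt
        have ht₂A : t₂ ∈ A := by
          refine ⟨⟨by linarith, min_le_right _ _⟩, fun u hu i => ?_⟩
          rcases le_or_gt u t₁ with h | h
          · exact hmem u ⟨hu.1, h⟩ i
          · refine (hball ?_ i).le
            rw [Real.dist_eq, abs_of_pos (by linarith : (0:ℝ) < u - t₁)]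
            have : u ≤ t₁ + ρ/2 := le_trans hu.2 (min_le_left _ _)
            linarith
        have := le_csSup hbdd ht₂A
        rw [← ht₁def] at this
        linarith
      · push_neg at hstrict
        obtain ⟨i₀, hi₀⟩ := hstrict
        have hge : 0 ≤ g i₀ t₁ := hmem t₁ ⟨hat, le_refl t₁⟩ i₀
        have heq : g i₀ t₁ = 0 := le_antisymm hi₀ hge
        have hcpos : 0 < εb * Real.exp (K * (t₁ - a)) := by positivity
        have hXi : X i₀ t₁ = -(εb * Real.exp (K * (t₁ - a))) := by
          have h5 : X i₀ t₁ + εb * Real.exp (K * (t₁ - a)) = 0 := heq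
          linarith
        have hat' : a < t₁ := by
          rcases eq_or_lt_of_le hat with h | h
          · exfalso
            have h6 := h0 i₀
            rw [← h] at hXi
            rw [hXi] at h6
            have h7 : 0 < εb * Real.exp (K * (a - a)) := by positivity
            linarith
          · exact h
        have hall : ∀ k, -(εb * Real.exp (K * (t₁ - a))) ≤ X k t₁ := by
          intro k
          have h7 : 0 ≤ g k t₁ := hmem t₁ ⟨hat, le_refl t₁⟩ k
          have h8 : g k t₁ = X k t₁ + εb * Real.exp (K * (t₁ - a)) := rfl
          linarith [h8 ▸ h7]
        have hDest := hest t₁ ⟨hat', htb⟩ _ hcpos hall i₀ hXi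
        have hder : HasDerivAt (g i₀)
            (D i₀ t₁ + εb * (Real.exp (K * (t₁ - a)) * (K * 1))) t₁ :=
          (hX i₀ t₁).add ((((hasDerivAt_id t₁).sub_const a).const_mul K).exp.const_mul εb)
        exact covid_no_contact (g i₀) a t₁ _ hat' hder heq
          (fun u hu => hmem u hu i₀) (by nlinarith)
    intro s hs i
    have h9 : 0 ≤ g i s := hmem s ⟨hs.1, by rw [ht1]; exact hs.2⟩ i
    have h10 : g i s = X i s + εb * Real.exp (K * (s - a)) := rfl
    linarith [h10 ▸ h9]
  intro s hs i
  by_contra hneg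
  push_neg at hneg
  have hexp : 0 < Real.exp (K * (s - a)) := Real.exp_pos _
  have hεb : 0 < -X i s / (2 * Real.exp (K * (s - a))) :=
    div_pos (by linarith) (by positivity)
  have hcl := claim _ hεb s hs i
  have heq2 : -(-X i s / (2 * Real.exp (K * (s - a))) * Real.exp (K * (s - a)))
      = X i s / 2 := by
    field_simp
  rw [heq2] at hcl
  linarith

private lemma covid_global_nonneg (X : Fin 6 → ℝ → ℝ) (hcont : ∀ i, Continuous (X i))
    (h0 : ∀ i, 0 ≤ X i 0)
    (hloc : ∀ a, 0 ≤ a → (∀ i, 0 ≤ X i a) →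
      ∃ δ, 0 < δ ∧ ∀ s ∈ Set.Icc a (a + δ), ∀ i, 0 ≤ X i s) :
    ∀ T, 0 ≤ T → ∀ i, 0 ≤ X i T := by
  intro T hT
  have hsup := covid_sup_mem X hcont 0 T hT h0
  set A := {s | s ∈ Set.Icc 0 T ∧ ∀ u ∈ Set.Icc 0 s, ∀ i, 0 ≤ X i u} with hA
  set t₀ := sSup A with ht₀
  obtain ⟨⟨h0t, htT⟩, hmem⟩ := hsup
  have hbdd : BddAbove A := ⟨T, fun s hs => hs.1.2⟩
  have hend : t₀ = T := by
    by_contra hne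
    have hlt : t₀ < T := lt_of_le_of_ne htT hne
    obtain ⟨δ, hδ, hδmem⟩ := hloc t₀ h0t (hmem t₀ ⟨h0t, le_refl _⟩)
    set t₂ := min (t₀ + δ) T with ht₂
    have h2 : t₀ < t₂ := lt_min (by linarith) hlt
    have ht₂A : t₂ ∈ A := by
      refine ⟨⟨by linarith, min_le_right _ _⟩, fun u hu i => ?_⟩
      rcases le_or_gt u t₀ with h | h
      · exact hmem u ⟨hu.1, h⟩ i
      · exact hδmem u ⟨h.le, le_trans hu.2 (min_le_left _ _)⟩ i
    have := le_csSup hbdd ht₂A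
    rw [← ht₀] at this; linarith
  exact fun i => hmem T ⟨hT, hend.ge⟩ i
private def cX (S_u S_a E I J R : ℝ → ℝ) : Fin 6 → ℝ → ℝ := ![S_u, S_a, E, I, J, R]

private noncomputable def cD (Pi β ν α θ ε γ p η σ₁ σ₂ δ₁ δ₂ μ : ℝ) (S_u S_a E I J R : ℝ → ℝ) :
    Fin 6 → ℝ → ℝ := ![
  fun t => Pi - β * (I t + ν * J t) * S_u t / (S_u t + S_a t + E t + I t + J t + R t)
    - α * S_a t * S_u t / (S_u t + S_a t + E t + I t + J t + R t)
    - μ * S_u t + θ * S_a t,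
  fun t => α * S_a t * S_u t / (S_u t + S_a t + E t + I t + J t + R t)
    - ε * β * (I t + ν * J t) * S_a t / (S_u t + S_a t + E t + I t + J t + R t)
    - (μ + θ) * S_a t,
  fun t => β * (I t + ν * J t) * (S_u t + ε * S_a t) / (S_u t + S_a t + E t + I t + J t + R t)
    - (γ + μ) * E t,
  fun t => (1 - p) * γ * E t - (η + σ₁ + μ + δ₁) * I t,
  fun t => p * γ * E t + η * I t - (σ₂ + μ + δ₂) * J t,
  fun t => σ₁ * I t + σ₂ * J t - μ * R t]

private lemma covid_HEST
    (Pi β ν α θ ε γ p η σ₁ σ₂ δ₁ δ₂ μ : ℝ)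
    (hPi : 0 < Pi) (hβ : 0 < β) (hν : 0 < ν) (hν1 : ν < 1) (hα : 0 < α)
    (hθ : 0 < θ) (hε : 0 < ε) (hε1 : ε < 1) (hγ : 0 < γ)
    (hp : 0 < p) (hp1 : p < 1) (hη : 0 < η) (hσ₁ : 0 < σ₁) (hσ₂ : 0 < σ₂)
    (hδ₁ : 0 < δ₁) (hδ₂ : 0 < δ₂) (hμ : 0 < μ)
    (S_u S_a E I J R : ℝ → ℝ) :
    ∀ (κ a δ : ℝ), 0 ≤ κ →
      (∀ s ∈ Set.Ioc a (a + δ), 0 < S_u s + S_a s + E s + I s + J s + R s) →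
      (∀ s ∈ Set.Ioc a (a + δ), ∀ k, |cX S_u S_a E I J R k s| ≤
        κ * (S_u s + S_a s + E s + I s + J s + R s)) →
      ∀ s ∈ Set.Ioc a (a + δ), ∀ c, 0 < c → (∀ k, -c ≤ cX S_u S_a E I J R k s) →
        ∀ i, cX S_u S_a E I J R i s = -c →
          -((1 + θ + γ + η + σ₁ + σ₂ + (3*α + 20*β)*(κ + 1)) * c) <
            cD Pi β ν α θ ε γ p η σ₁ σ₂ δ₁ δ₂ μ S_u S_a E I J R i s := by
  intro κ a δ hκ hN hB s hs c hc hall i hcon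
  have hn : 0 < S_u s + S_a s + E s + I s + J s + R s := hN s hs
  set n := S_u s + S_a s + E s + I s + J s + R s with hndef
  have l0 : -c ≤ S_u s := hall 0
  have l1 : -c ≤ S_a s := hall 1
  have l2 : -c ≤ E s := hall 2
  have l3 : -c ≤ I s := hall 3
  have l4 : -c ≤ J s := hall 4
  have l5 : -c ≤ R s := hall 5
  have u0 : |S_u s| ≤ κ * n := hB s hs 0
  have u1 : |S_a s| ≤ κ * n := hB s hs 1
  have u2 : |E s| ≤ κ * n := hB s hs 2
  have u3 : |I s| ≤ κ * n := hB s hs 3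
  have u4 : |J s| ≤ κ * n := hB s hs 4
  have u5 : |R s| ≤ κ * n := hB s hs 5
  have b0 : S_u s ≤ κ * n := (abs_le.mp u0).2
  have b1 : S_a s ≤ κ * n := (abs_le.mp u1).2
  have b3 : I s ≤ κ * n := (abs_le.mp u3).2
  have b4 : J s ≤ κ * n := (abs_le.mp u4).2
  have hαβκ : 0 ≤ α * κ := mul_nonneg hα.le hκ
  have hβκ : 0 ≤ β * κ := mul_nonneg hβ.le hκ
  fin_cases i
  · -- S_u contact
    simp only [cX, cD, Matrix.cons_val_zero, Matrix.cons_val_one,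
      Matrix.head_cons, Matrix.cons_val_two, Matrix.tail_cons, Matrix.cons_val_three,
      Matrix.cons_val_four, Matrix.cons_val_fin_one, Fin.isValue] at hcon ⊢
    have hcon' : S_u s = -c := hcon
    have hcn : c ≤ κ * n := by
      have h9 := (abs_le.mp u0).1; rw [hcon'] at h9; linarith
    refine lt_of_lt_of_le ?_
      (covid_est_Su Pi β ν α θ μ κ c (S_a s) (I s) (J s) n
        hβ hν hν1 hα hθ hμ hPi hκ hn hc l1 l3 l4 b1 hcn hcon')
    have hgap : (2*β*κ + α*κ + θ) < 1 + θ + γ + η + σ₁ + σ₂ + (3*α + 20*β)*(κ + 1) := by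
      linarith only [hθ, hγ, hη, hσ₁, hσ₂, hα, hβ, mul_nonneg hα.le hκ, mul_nonneg hβ.le hκ]
    linarith only [mul_pos (sub_pos.mpr hgap) hc]
  · -- S_a contact
    simp only [cX, cD, Matrix.cons_val_zero, Matrix.cons_val_one,
      Matrix.head_cons, Matrix.cons_val_two, Matrix.tail_cons, Matrix.cons_val_three,
      Matrix.cons_val_four, Matrix.cons_val_fin_one, Fin.isValue] at hcon ⊢
    have hcon' : S_a s = -c := hcon
    have hcn : c ≤ κ * n := by
      have h9 := (abs_le.mp u1).1; rw [hcon'] at h9; linarith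
    refine lt_of_lt_of_le ?_
      (covid_est_Sa β ν α θ μ ε κ c (S_u s) (I s) (J s) n
        hβ hν hν1 hα hθ hμ hε hε1 hκ hn hc l3 l4 b0 hcn hcon')
    have hgap : (α*κ + 2*β*κ) < 1 + θ + γ + η + σ₁ + σ₂ + (3*α + 20*β)*(κ + 1) := by
      linarith only [hθ, hγ, hη, hσ₁, hσ₂, hα, hβ, mul_nonneg hα.le hκ, mul_nonneg hβ.le hκ]
    linarith only [mul_pos (sub_pos.mpr hgap) hc]
  · -- E contact
    simp only [cX, cD, Matrix.cons_val_zero, Matrix.cons_val_one,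
      Matrix.head_cons, Matrix.cons_val_two, Matrix.tail_cons, Matrix.cons_val_three,
      Matrix.cons_val_four, Matrix.cons_val_fin_one, Fin.isValue] at hcon ⊢
    have hcon' : E s = -c := hcon
    have hcn : c ≤ κ * n := by
      have h9 := (abs_le.mp u2).1; rw [hcon'] at h9; linarith
    refine lt_of_lt_of_le ?_
      (covid_est_E β ν γ μ ε κ c (S_u s) (S_a s) (I s) (J s) n
        hβ hν hν1 hγ hμ hε hε1 hκ hn hc l0 l1 l3 l4 b0 b1 b3 b4 hcn hcon')
    have hgap : 12*β*κ < 1 + θ + γ + η + σ₁ + σ₂ + (3*α + 20*β)*(κ + 1) := by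
      linarith only [hθ, hγ, hη, hσ₁, hσ₂, hα, hβ, mul_nonneg hα.le hκ, mul_nonneg hβ.le hκ]
    linarith only [mul_pos (sub_pos.mpr hgap) hc]
  · -- I contact
    simp only [cX, cD, Matrix.cons_val_zero, Matrix.cons_val_one,
      Matrix.head_cons, Matrix.cons_val_two, Matrix.tail_cons, Matrix.cons_val_three,
      Matrix.cons_val_four, Matrix.cons_val_fin_one, Fin.isValue] at hcon ⊢
    have hcon' : I s = -c := hcon
    refine lt_of_lt_of_le ?_
      (covid_est_I γ p η σ₁ μ δ₁ c (E s) hγ hp hp1 hη hσ₁ hμ hδ₁ hc l2 hcon')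
    have hgap : γ < 1 + θ + γ + η + σ₁ + σ₂ + (3*α + 20*β)*(κ + 1) := by
      linarith only [hθ, hγ, hη, hσ₁, hσ₂, hα, hβ, mul_nonneg hα.le hκ, mul_nonneg hβ.le hκ]
    linarith only [mul_pos (sub_pos.mpr hgap) hc]
  · -- J contact
    simp only [cX, cD, Matrix.cons_val_zero, Matrix.cons_val_one,
      Matrix.head_cons, Matrix.cons_val_two, Matrix.tail_cons, Matrix.cons_val_three,
      Matrix.cons_val_four, Matrix.cons_val_fin_one, Fin.isValue] at hcon ⊢
    have hcon' : J s = -c := hcon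
    refine lt_of_lt_of_le ?_
      (covid_est_J γ p η σ₂ μ δ₂ c (E s) (I s) hγ hp hp1 hη hσ₂ hμ hδ₂ hc l2 l3 hcon')
    have hgap : γ + η < 1 + θ + γ + η + σ₁ + σ₂ + (3*α + 20*β)*(κ + 1) := by
      linarith only [hθ, hγ, hη, hσ₁, hσ₂, hα, hβ, mul_nonneg hα.le hκ, mul_nonneg hβ.le hκ]
    linarith only [mul_pos (sub_pos.mpr hgap) hc]
  · -- R contact
    simp only [cX, cD, Matrix.cons_val_zero, Matrix.cons_val_one,
      Matrix.head_cons, Matrix.cons_val_two, Matrix.tail_cons, Matrix.cons_val_three,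
      Matrix.cons_val_four, Matrix.cons_val_fin_one, Fin.isValue] at hcon ⊢
    have hcon' : R s = -c := hcon
    refine lt_of_lt_of_le ?_
      (covid_est_R σ₁ σ₂ μ c (I s) (J s) hσ₁ hσ₂ hμ hc l3 l4 hcon')
    have hgap : σ₁ + σ₂ < 1 + θ + γ + η + σ₁ + σ₂ + (3*α + 20*β)*(κ + 1) := by
      linarith only [hθ, hγ, hη, hσ₁, hσ₂, hα, hβ, mul_nonneg hα.le hκ, mul_nonneg hβ.le hκ]
    linarith only [mul_pos (sub_pos.mpr hgap) hc]


set_option maxHeartbeats 1000000 in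
/-- For the six-dimensional COVID-19 ODE system, the nonnegative
orthant is positively invariant: a solution with nonnegative initial data stays
nonnegative for all `t ≥ 0`. -/
theorem covid_nonneg_invariant
    (Pi β ν α θ ε γ p η σ₁ σ₂ δ₁ δ₂ μ : ℝ)
    (hPi : 0 < Pi) (hβ : 0 < β) (hν : 0 < ν) (hν1 : ν < 1) (hα : 0 < α)
    (hθ : 0 < θ) (hε : 0 < ε) (hε1 : ε < 1) (hγ : 0 < γ)
    (hp : 0 < p) (hp1 : p < 1) (hη : 0 < η) (hσ₁ : 0 < σ₁) (hσ₂ : 0 < σ₂)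
    (hδ₁ : 0 < δ₁) (hδ₂ : 0 < δ₂) (hμ : 0 < μ)
    (S_u S_a E I J R : ℝ → ℝ)
    (hS_u : ∀ t, HasDerivAt S_u
      (Pi - β * (I t + ν * J t) * S_u t / (S_u t + S_a t + E t + I t + J t + R t)
        - α * S_a t * S_u t / (S_u t + S_a t + E t + I t + J t + R t)
        - μ * S_u t + θ * S_a t) t)
    (hS_a : ∀ t, HasDerivAt S_a
      (α * S_a t * S_u t / (S_u t + S_a t + E t + I t + J t + R t)
        - ε * β * (I t + ν * J t) * S_a t / (S_u t + S_a t + E t + I t + J t + R t)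
        - (μ + θ) * S_a t) t)
    (hE : ∀ t, HasDerivAt E
      (β * (I t + ν * J t) * (S_u t + ε * S_a t) / (S_u t + S_a t + E t + I t + J t + R t)
        - (γ + μ) * E t) t)
    (hI : ∀ t, HasDerivAt I ((1 - p) * γ * E t - (η + σ₁ + μ + δ₁) * I t) t)
    (hJ : ∀ t, HasDerivAt J (p * γ * E t + η * I t - (σ₂ + μ + δ₂) * J t) t)
    (hR : ∀ t, HasDerivAt R (σ₁ * I t + σ₂ * J t - μ * R t) t)
    (hS_u0 : 0 ≤ S_u 0) (hS_a0 : 0 ≤ S_a 0) (hE0 : 0 ≤ E 0)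
    (hI0 : 0 ≤ I 0) (hJ0 : 0 ≤ J 0) (hR0 : 0 ≤ R 0) :
    ∀ t ≥ (0 : ℝ),
      0 ≤ S_u t ∧ 0 ≤ S_a t ∧ 0 ≤ E t ∧ 0 ≤ I t ∧ 0 ≤ J t ∧ 0 ≤ R t := by
  set X : Fin 6 → ℝ → ℝ := cX S_u S_a E I J R with hXdef
  set D : Fin 6 → ℝ → ℝ := cD Pi β ν α θ ε γ p η σ₁ σ₂ δ₁ δ₂ μ S_u S_a E I J R with hDdef
  have hX : ∀ i t, HasDerivAt (X i) (D i t) t := by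
    intro i t
    fin_cases i <;>
      simp only [hXdef, cX, hDdef, cX, cD, Matrix.cons_val_zero, Matrix.cons_val_one,
        Matrix.head_cons, Matrix.cons_val_two, Matrix.tail_cons, Matrix.cons_val_three,
        Matrix.cons_val_four, Matrix.cons_val_fin_one, Fin.isValue]
    · exact hS_u t
    · exact hS_a t
    · exact hE t
    · exact hI t
    · exact hJ t
    · exact hR t
  have hcont : ∀ i, Continuous (X i) := fun i =>
    Differentiable.continuous (fun t => (hX i t).differentiableAt)
  have h00 : ∀ i, 0 ≤ X i 0 := by
    intro i; fin_cases i <;> assumption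
  have HEST := covid_HEST Pi β ν α θ ε γ p η σ₁ σ₂ δ₁ δ₂ μ hPi hβ hν hν1 hα hθ hε hε1 hγ hp hp1 hη hσ₁ hσ₂ hδ₁ hδ₂ hμ S_u S_a E I J R
  -- local forward invariance
  have hloc : ∀ a, 0 ≤ a → (∀ i, 0 ≤ X i a) →
      ∃ δ, 0 < δ ∧ ∀ s ∈ Set.Icc a (a + δ), ∀ i, 0 ≤ X i s := by
    intro a _ hnn
    have n0 : 0 ≤ S_u a := hnn 0
    have n1 : 0 ≤ S_a a := hnn 1
    have n2 : 0 ≤ E a := hnn 2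
    have n3 : 0 ≤ I a := hnn 3
    have n4 : 0 ≤ J a := hnn 4
    have n5 : 0 ≤ R a := hnn 5
    have hNsum0 : 0 ≤ S_u a + S_a a + E a + I a + J a + R a := by linarith
    have hNcont : Continuous (fun t => S_u t + S_a t + E t + I t + J t + R t) := by
      have c0 : Continuous S_u := hcont 0
      have c1 : Continuous S_a := hcont 1
      have c2 : Continuous E := hcont 2
      have c3 : Continuous I := hcont 3
      have c4 : Continuous J := hcont 4
      have c5 : Continuous R := hcont 5
      fun_prop
    rcases eq_or_lt_of_le hNsum0 with hNa | hNa
    · -- degenerate case: all components vanish at a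
      have hzSu : S_u a = 0 := by linarith
      have hzSa : S_a a = 0 := by linarith
      have hzE : E a = 0 := by linarith
      have hzI : I a = 0 := by linarith
      have hzJ : J a = 0 := by linarith
      have hzR : R a = 0 := by linarith
      have hdSu : HasDerivAt S_u Pi a := by
        have h := hS_u a
        have heq : Pi - β * (I a + ν * J a) * S_u a / (S_u a + S_a a + E a + I a + J a + R a)
            - α * S_a a * S_u a / (S_u a + S_a a + E a + I a + J a + R a)
            - μ * S_u a + θ * S_a a = Pi := by
          rw [hzSu, hzSa, hzE, hzI, hzJ, hzR]; norm_num
        rwa [heq] at h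
      have hdSa : HasDerivAt S_a 0 a := by
        have h := hS_a a
        have heq : α * S_a a * S_u a / (S_u a + S_a a + E a + I a + J a + R a)
            - ε * β * (I a + ν * J a) * S_a a / (S_u a + S_a a + E a + I a + J a + R a)
            - (μ + θ) * S_a a = 0 := by
          rw [hzSu, hzSa, hzE, hzI, hzJ, hzR]; norm_num
        rwa [heq] at h
      have hdE : HasDerivAt E 0 a := by
        have h := hE a
        have heq : β * (I a + ν * J a) * (S_u a + ε * S_a a) /
            (S_u a + S_a a + E a + I a + J a + R a) - (γ + μ) * E a = 0 := by
          rw [hzSu, hzSa, hzE, hzI, hzJ, hzR]; norm_num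
        rwa [heq] at h
      have hdI : HasDerivAt I 0 a := by
        have h := hI a
        have heq : (1 - p) * γ * E a - (η + σ₁ + μ + δ₁) * I a = 0 := by
          rw [hzE, hzI]; ring
        rwa [heq] at h
      have hdJ : HasDerivAt J 0 a := by
        have h := hJ a
        have heq : p * γ * E a + η * I a - (σ₂ + μ + δ₂) * J a = 0 := by
          rw [hzE, hzI, hzJ]; ring
        rwa [heq] at h
      have hdR : HasDerivAt R 0 a := by
        have h := hR a
        have heq : σ₁ * I a + σ₂ * J a - μ * R a = 0 := by
          rw [hzI, hzJ, hzR]; ring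
        rwa [heq] at h
      have hdN : HasDerivAt (fun t => S_u t + S_a t + E t + I t + J t + R t) Pi a := by
        have h := ((((hdSu.add hdSa).add hdE).add hdI).add hdJ).add hdR
        rw [show Pi = Pi + 0 + 0 + 0 + 0 + 0 by ring]
        exact h
      -- slope estimates
      have slope_fact : ∀ (f : ℝ → ℝ) (d : ℝ), f a = 0 → HasDerivAt f d a →
          ∀ᶠ s in 𝓝[>] a,
            (d - Pi/4) * (s - a) < f s ∧ f s < (d + Pi/4) * (s - a) := by
        intro f d hfa hd
        have h1 : Tendsto (slope f a) (𝓝[>] a) (𝓝 d) :=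
          (hasDerivAt_iff_tendsto_slope.mp hd).mono_left
            (nhdsWithin_mono _ (fun x hx => ne_of_gt hx))
        have h2 := h1.eventually (Ioo_mem_nhds
          (show d - Pi/4 < d by linarith) (show d < d + Pi/4 by linarith))
        filter_upwards [h2, self_mem_nhdsWithin] with s hs hsa
        have hsa' : a < s := hsa
        have hspos : 0 < s - a := sub_pos.mpr hsa'
        have hfs : f s = slope f a s * (s - a) := by
          rw [slope_def_field, hfa]
          field_simp
          ring
        constructor
        · nlinarith [mul_lt_mul_of_pos_right hs.1 hspos]
        · nlinarith [mul_lt_mul_of_pos_right hs.2 hspos]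
      have e0 := slope_fact S_u Pi hzSu hdSu
      have e1 := slope_fact S_a 0 hzSa hdSa
      have e2 := slope_fact E 0 hzE hdE
      have e3 := slope_fact I 0 hzI hdI
      have e4 := slope_fact J 0 hzJ hdJ
      have e5 := slope_fact R 0 hzR hdR
      have eN := slope_fact (fun t => S_u t + S_a t + E t + I t + J t + R t) Pi
        (by simpa using hNa.symm) hdN
      have ev := e0.and (e1.and (e2.and (e3.and (e4.and (e5.and eN)))))
      rw [eventually_iff] at ev
      obtain ⟨u, hu, hsub⟩ := mem_nhdsGT_iff_exists_Ioc_subset.mp ev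
      have hua : a < u := hu
      refine ⟨u - a, by linarith, ?_⟩
      have hEq : a + (u - a) = u := by ring
      -- properties on Ioc
      have hNpos : ∀ s ∈ Set.Ioc a (a + (u - a)), 0 < S_u s + S_a s + E s + I s + J s + R s := by
        intro s hs
        rw [hEq] at hs
        have hprop := hsub hs
        have hN := hprop.2.2.2.2.2.2.1
        have hsp : 0 < s - a := sub_pos.mpr hs.1
        linarith only [hN, mul_pos hPi hsp]
      have hbound : ∀ s ∈ Set.Ioc a (a + (u - a)), ∀ k,
          |X k s| ≤ 2 * (S_u s + S_a s + E s + I s + J s + R s) := by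
        intro s hs
        rw [hEq] at hs
        have hprop := hsub hs
        obtain ⟨p0, p1, p2, p3, p4, p5, pN⟩ := hprop
        have hspos : 0 < s - a := sub_pos.mpr hs.1
        have hNlow : (Pi - Pi/4) * (s - a) < S_u s + S_a s + E s + I s + J s + R s := pN.1
        have q0 : |S_u s| ≤ 2 * (S_u s + S_a s + E s + I s + J s + R s) := by
          rw [abs_le]
          constructor <;> linarith only [hNlow, mul_pos hPi hspos, p0.1, p0.2]
        have q1 : |S_a s| ≤ 2 * (S_u s + S_a s + E s + I s + J s + R s) := by
          rw [abs_le]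
          constructor <;> linarith only [hNlow, mul_pos hPi hspos, p1.1, p1.2]
        have q2 : |E s| ≤ 2 * (S_u s + S_a s + E s + I s + J s + R s) := by
          rw [abs_le]
          constructor <;> linarith only [hNlow, mul_pos hPi hspos, p2.1, p2.2]
        have q3 : |I s| ≤ 2 * (S_u s + S_a s + E s + I s + J s + R s) := by
          rw [abs_le]
          constructor <;> linarith only [hNlow, mul_pos hPi hspos, p3.1, p3.2]
        have q4 : |J s| ≤ 2 * (S_u s + S_a s + E s + I s + J s + R s) := by
          rw [abs_le]
          constructor <;> linarith only [hNlow, mul_pos hPi hspos, p4.1, p4.2]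
        have q5 : |R s| ≤ 2 * (S_u s + S_a s + E s + I s + J s + R s) := by
          rw [abs_le]
          constructor <;> linarith only [hNlow, mul_pos hPi hspos, p5.1, p5.2]
        intro k
        fin_cases k
        · exact q0
        · exact q1
        · exact q2
        · exact q3
        · exact q4
        · exact q5
      exact covid_barrier_local X D hX
        (1 + θ + γ + η + σ₁ + σ₂ + (3*α + 20*β)*(2 + 1)) a (u - a) (by linarith) hnn
        (HEST 2 a (u - a) (by norm_num) hNpos hbound)
    · -- positive total population case
      set m := |S_u a| + |S_a a| + |E a| + |I a| + |J a| + |R a| + 1 with hm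
      have hmpos : 0 < m := by positivity
      set Na := S_u a + S_a a + E a + I a + J a + R a with hNadef
      set κ := 2 * m / Na with hκdef
      have hκpos : 0 < κ := by positivity
      have hev : ∀ᶠ s in 𝓝 a,
          Na / 2 < S_u s + S_a s + E s + I s + J s + R s ∧ ∀ k, |X k s| < m := by
        have hev1 : ∀ᶠ s in 𝓝 a, Na / 2 < S_u s + S_a s + E s + I s + J s + R s :=
          (hNcont.tendsto a).eventually (eventually_gt_nhds (by linarith))
        have hev2 : ∀ᶠ s in 𝓝 a, ∀ k, |X k s| < m := by
          have habs : ∀ k : Fin 6, |X k a| < m := by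
            have w0 := abs_nonneg (S_u a); have w1 := abs_nonneg (S_a a)
            have w2 := abs_nonneg (E a); have w3 := abs_nonneg (I a)
            have w4 := abs_nonneg (J a); have w5 := abs_nonneg (R a)
            have q0 : |S_u a| < m := by rw [hm]; linarith
            have q1 : |S_a a| < m := by rw [hm]; linarith
            have q2 : |E a| < m := by rw [hm]; linarith
            have q3 : |I a| < m := by rw [hm]; linarith
            have q4 : |J a| < m := by rw [hm]; linarith
            have q5 : |R a| < m := by rw [hm]; linarith
            intro k
            fin_cases k
            · exact q0
            · exact q1
            · exact q2
            · exact q3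
            · exact q4
            · exact q5
          refine eventually_all.mpr (fun k => ?_)
          exact ((hcont k).abs.tendsto a).eventually (eventually_lt_nhds (habs k))
        exact hev1.and hev2
      rw [Metric.eventually_nhds_iff] at hev
      obtain ⟨ρ, hρ, hball⟩ := hev
      refine ⟨ρ/2, by linarith, ?_⟩
      have hNpos : ∀ s ∈ Set.Ioc a (a + ρ/2), 0 < S_u s + S_a s + E s + I s + J s + R s := by
        intro s hs
        have hd : dist s a < ρ := by
          rw [Real.dist_eq, abs_of_pos (by linarith [hs.1] : (0:ℝ) < s - a)]
          linarith [hs.2]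
        have := (hball hd).1
        linarith
      have hbound : ∀ s ∈ Set.Ioc a (a + ρ/2), ∀ k,
          |X k s| ≤ κ * (S_u s + S_a s + E s + I s + J s + R s) := by
        intro s hs k
        have hd : dist s a < ρ := by
          rw [Real.dist_eq, abs_of_pos (by linarith [hs.1] : (0:ℝ) < s - a)]
          linarith [hs.2]
        have h1 := (hball hd).1
        have h2 := (hball hd).2 k
        have hκN : m ≤ κ * (Na / 2) := by
          rw [hκdef]
          rw [div_mul_eq_mul_div, mul_comm]
          rw [le_div_iff₀ (by linarith : (0:ℝ) < Na)]
          ring_nf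
          nlinarith
        have : κ * (Na / 2) ≤ κ * (S_u s + S_a s + E s + I s + J s + R s) :=
          mul_le_mul_of_nonneg_left (by linarith) hκpos.le
        linarith
      exact covid_barrier_local X D hX
        (1 + θ + γ + η + σ₁ + σ₂ + (3*α + 20*β)*(κ + 1)) a (ρ/2) (by linarith) hnn
        (HEST κ a (ρ/2) hκpos.le hNpos hbound)
  intro t ht
  have hglob := covid_global_nonneg X hcont h00 hloc t ht
  exact ⟨hglob 0, hglob 1, hglob 2, hglob 3, hglob 4, hglob 5⟩
end

section
/- If max{R₁, α/(μ+θ)} < 1, then every eigenvalue of the Jacobian matrix J_{E₀} of the COVID-19 model at the awareness-free disease-free equilibrium E₀ has negative real part (so E₀ is locally asymptotically stable); if max{R₁, α/(μ+θ)} > 1, then J_{E₀} has at least one eigenvalue with positive real part (so E₀ is unstable). -/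
set_option maxRecDepth 8000
set_option maxHeartbeats 1000000

lemma my_cons_val_five {α : Type*} {m : ℕ} (x : α) (u : Fin (m + 5) → α) :
    Matrix.vecCons x u 5 =
      Matrix.vecHead (Matrix.vecTail (Matrix.vecTail (Matrix.vecTail (Matrix.vecTail u)))) :=
  rfl

lemma my_det6 (d0 a01 a03 a04 d1 a22 a23 a24 a32 a33 a42 a43 a44 a53 a54 d5 : ℂ) :
    Matrix.det !![d0, a01, 0, a03, a04, 0;
                  0, d1, 0, 0, 0, 0;
                  0, 0, a22, a23, a24, 0;
                  0, 0, a32, a33, 0, 0;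
                  0, 0, a42, a43, a44, 0;
                  0, 0, 0, a53, a54, d5]
    = d0 * d1 * d5 * (a22*a33*a44 + a24*a32*a43 - a24*a33*a42 - a23*a32*a44) := by
  simp [Matrix.det_succ_row_zero, Fin.sum_univ_succ, Fin.succAbove, Matrix.submatrix_apply]
  ring

/-- Routh–Hurwitz criterion for a cubic: if all coefficients are positive and
`c < a*b` then every complex root has negative real part. -/
lemma my_cubic_neg_re (a b c : ℝ) (ha : 0 < a) (hb : 0 < b) (hc : 0 < c) (hab : c < a * b)
    (z : ℂ) (hz : z^3 + (a:ℂ)*z^2 + (b:ℂ)*z + (c:ℂ) = 0) : z.re < 0 := by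
  have hre := congrArg Complex.re hz
  have him := congrArg Complex.im hz
  simp only [Complex.add_re, Complex.add_im, Complex.mul_re, Complex.mul_im,
    Complex.ofReal_re, Complex.ofReal_im, pow_succ, pow_zero, one_mul,
    Complex.one_re, Complex.one_im, Complex.zero_re, Complex.zero_im] at hre him
  set x := z.re
  set y := z.im
  by_contra hxn
  push_neg at hxn
  rcases eq_or_ne y 0 with h0 | h0
  · rw [h0] at hre
    nlinarith [mul_nonneg (mul_nonneg hxn hxn) hxn, mul_nonneg hxn hxn]
  · have hy2 : y^2 = 3*x^2 + 2*a*x + b := by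
      have h : y * (3*x^2 - y^2 + 2*a*x + b) = 0 := by linear_combination him
      rcases mul_eq_zero.1 h with h' | h'
      · exact absurd h' h0
      · nlinarith [h']
    nlinarith [hre, hy2, mul_nonneg (mul_nonneg hxn hxn) hxn, mul_nonneg hxn hxn,
      mul_nonneg (mul_nonneg ha.le hxn) hxn, mul_nonneg hb.le hxn,
      mul_nonneg (mul_nonneg ha.le ha.le) hxn]

/-- A monic cubic with positive leading behaviour and negative constant term has a
positive real root. -/
lemma my_cubic_pos_root (a b c : ℝ) (ha : 0 < a) (hc : c < 0) :
    ∃ x : ℝ, 0 < x ∧ x^3 + a*x^2 + b*x + c = 0 := by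
  set t : ℝ := 1 + |b| + |c| with htdef
  set f : ℝ → ℝ := fun x => x^3 + a*x^2 + b*x + c with hf
  have hb' := abs_nonneg b
  have hc' := abs_nonneg c
  have ht0 : (0:ℝ) ≤ t := by linarith
  have hcont : ContinuousOn f (Set.Icc 0 t) := by fun_prop
  have h0 : f 0 = c := by simp [hf]
  have ht : 0 < f t := by
    have hft : f t = t^3 + a*t^2 + b*t + c := rfl
    rw [hft]
    have h1 : (1:ℝ) ≤ t := by linarith
    have e1 : -|b| ≤ b := neg_abs_le b
    have e2 : -|c| ≤ c := neg_abs_le c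
    nlinarith [mul_nonneg ha.le (sq_nonneg t), mul_nonneg hb' hc', mul_nonneg hb' hb',
      mul_nonneg hc' hc', mul_nonneg (by linarith : (0:ℝ) ≤ b + |b|) ht0,
      mul_nonneg (mul_nonneg hb' hb') hc', mul_nonneg (mul_nonneg hc' hc') hb',
      mul_nonneg (mul_nonneg hb' hb') hb', mul_nonneg (mul_nonneg hc' hc') hc',
      mul_nonneg (mul_nonneg hb' hc') hc']
  have hsub : Set.Icc (f 0) (f t) ⊆ f '' Set.Icc 0 t := intermediate_value_Icc ht0 hcont
  have h00 : (0:ℝ) ∈ Set.Icc (f 0) (f t) := ⟨by rw [h0]; exact hc.le, ht.le⟩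
  obtain ⟨x, hxmem, hfx⟩ := hsub h00
  refine ⟨x, ?_, hfx⟩
  rcases hxmem.1.lt_or_eq with h | h
  · exact h
  · exfalso; rw [← h, h0] at hfx; linarith

/-- local stability of the awareness-free disease-free equilibrium.
If `max{R₁, α/(μ+θ)} < 1`, every eigenvalue (root of the characteristic
polynomial over ℂ) of the Jacobian `J_{E₀}` has negative real part; if
`max{R₁, α/(μ+θ)} > 1`, some eigenvalue has positive real part. -/
theorem covid_E0_local_stability
    (β ν α θ γ p η σ₁ σ₂ δ₁ δ₂ μ : ℝ)
    (hβ : 0 < β) (hν : 0 < ν) (hν1 : ν < 1) (hα : 0 < α) (hθ : 0 < θ) (hγ : 0 < γ)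
    (hp : 0 < p) (hp1 : p < 1) (hη : 0 < η) (hσ₁ : 0 < σ₁) (hσ₂ : 0 < σ₂)
    (hδ₁ : 0 < δ₁) (hδ₂ : 0 < δ₂) (hμ : 0 < μ)
    (m₁ m₂ R₁ : ℝ)
    (hm₁ : m₁ = η + σ₁ + μ + δ₁)
    (hm₂ : m₂ = σ₂ + μ + δ₂)
    (hR₁ : R₁ = (β * γ / (m₂ * (μ + γ))) * ((1 - p) * (η * ν + m₂) / m₁ + p * ν))
    (JE₀ : Matrix (Fin 6) (Fin 6) ℝ)
    (hJ : JE₀ = !![-μ, -α + θ, 0, -β, -ν * β, 0;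
                   0, α - (μ + θ), 0, 0, 0, 0;
                   0, 0, -(μ + γ), β, ν * β, 0;
                   0, 0, (1 - p) * γ, -(η + σ₁ + μ + δ₁), 0, 0;
                   0, 0, p * γ, η, -(σ₂ + μ + δ₂), 0;
                   0, 0, 0, σ₁, σ₂, -μ]) :
    (max R₁ (α / (μ + θ)) < 1 →
      ∀ z : ℂ, (JE₀.map (fun x : ℝ => (x : ℂ))).charpoly.IsRoot z → z.re < 0) ∧
    (1 < max R₁ (α / (μ + θ)) →
      ∃ z : ℂ, (JE₀.map (fun x : ℝ => (x : ℂ))).charpoly.IsRoot z ∧ 0 < z.re) := by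
  have hs : 0 < μ + γ := by linarith
  have hμθ : 0 < μ + θ := by linarith
  have hm₁p : 0 < m₁ := by rw [hm₁]; linarith
  have hm₂p : 0 < m₂ := by rw [hm₂]; linarith
  -- basic identity coming from the definition of R₁
  have hE : R₁ * ((μ+γ) * m₁ * m₂) = β*γ*((1-p)*(η*ν+m₂) + p*ν*m₁) := by
    have h₁ : m₁ ≠ 0 := ne_of_gt hm₁p
    have h₂ : m₂ ≠ 0 := ne_of_gt hm₂p
    have h₃ : μ + γ ≠ 0 := ne_of_gt hs
    rw [hR₁]; field_simp
  -- characteristic polynomial factorisation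
  have key : ∀ z : ℂ, Polynomial.eval z (JE₀.map (fun x : ℝ => (x : ℂ))).charpoly =
      (z + (μ:ℂ))^2 * (z - ((α:ℂ) - ((μ:ℂ)+(θ:ℂ)))) *
        (z^3 + (((μ+γ) + m₁ + m₂ : ℝ):ℂ)*z^2
          + (((μ+γ)*m₁ + (μ+γ)*m₂ + m₁*m₂ - β*γ*((1-p) + ν*p) : ℝ):ℂ)*z
          + (((μ+γ)*m₁*m₂ - β*γ*((1-p)*(m₂+ν*η) + ν*p*m₁) : ℝ):ℂ)) := by
    intro z
    have hN : (Matrix.charmatrix (JE₀.map (fun x : ℝ => (x : ℂ)))).map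
        (Polynomial.evalRingHom z) =
        !![z+(μ:ℂ), (α:ℂ)-θ, 0, (β:ℂ), (ν:ℂ)*β, 0;
           0, z-((α:ℂ)-(μ+θ)), 0, 0, 0, 0;
           0, 0, z+((μ:ℂ)+γ), -(β:ℂ), -((ν:ℂ)*β), 0;
           0, 0, -((1-(p:ℂ))*γ), z+((η:ℂ)+σ₁+μ+δ₁), 0, 0;
           0, 0, -((p:ℂ)*γ), -(η:ℂ), z+((σ₂:ℂ)+μ+δ₂), 0;
           0, 0, 0, -(σ₁:ℂ), -(σ₂:ℂ), z+(μ:ℂ)] := by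
      rw [hJ]
      ext i j
      fin_cases i <;> fin_cases j <;>
        simp [Matrix.charmatrix_apply, Matrix.map_apply, Matrix.diagonal,
          Matrix.cons_val_two, Matrix.cons_val_three, Matrix.cons_val_four, my_cons_val_five,
          Matrix.vecHead, Matrix.vecTail] <;> push_cast <;> ring
    rw [Matrix.charpoly, ← Polynomial.coe_evalRingHom, RingHom.map_det,
      RingHom.mapMatrix_apply, hN, my_det6, hm₁, hm₂]
    push_cast
    ring
  constructor
  · -- stability
    intro hmax z hz
    have hR1 : R₁ < 1 := (max_lt_iff.1 hmax).1
    have hαθ : α < μ + θ := by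
      have h := (max_lt_iff.1 hmax).2
      rwa [div_lt_one hμθ] at h
    have hElt : β*γ*((1-p)*(η*ν+m₂) + p*ν*m₁) < (μ+γ)*m₁*m₂ := by
      nlinarith [hE, mul_pos (mul_pos hs hm₁p) hm₂p]
    have h1 : β*γ*(1-p) < (μ+γ)*m₁ := by
      nlinarith [hElt, hm₂p,
        mul_nonneg (mul_nonneg (mul_nonneg (mul_nonneg hβ.le hγ.le)
          (by linarith : (0:ℝ) ≤ 1-p)) hη.le) hν.le,
        mul_nonneg (mul_nonneg (mul_nonneg (mul_nonneg hβ.le hγ.le) hp.le) hν.le) hm₁p.le]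
    have h2 : β*γ*(ν*p) < (μ+γ)*m₂ := by
      nlinarith [hElt, hm₁p,
        mul_nonneg (mul_nonneg (mul_nonneg (mul_nonneg hβ.le hγ.le)
          (by linarith : (0:ℝ) ≤ 1-p)) hη.le) hν.le,
        mul_nonneg (mul_nonneg (mul_nonneg hβ.le hγ.le)
          (by linarith : (0:ℝ) ≤ 1-p)) hm₂p.le]
    have hApos : 0 < (μ+γ) + m₁ + m₂ := by linarith
    have hBpos : 0 < (μ+γ)*m₁ + (μ+γ)*m₂ + m₁*m₂ - β*γ*((1-p) + ν*p) := by
      nlinarith [mul_pos hm₁p hm₂p]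
    have hCpos : 0 < (μ+γ)*m₁*m₂ - β*γ*((1-p)*(m₂+ν*η) + ν*p*m₁) := by nlinarith [hElt]
    have hABlt : (μ+γ)*m₁*m₂ - β*γ*((1-p)*(m₂+ν*η) + ν*p*m₁) <
        ((μ+γ) + m₁ + m₂) * ((μ+γ)*m₁ + (μ+γ)*m₂ + m₁*m₂ - β*γ*((1-p) + ν*p)) := by
      nlinarith [mul_lt_mul_of_pos_right h1 (show (0:ℝ) < (μ+γ) + m₁ by linarith),
        mul_lt_mul_of_pos_right h2 (show (0:ℝ) < (μ+γ) + m₂ by linarith),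
        mul_nonneg (mul_nonneg (mul_nonneg (mul_nonneg hβ.le hγ.le)
          (by linarith : (0:ℝ) ≤ 1-p)) hν.le) hη.le,
        mul_pos (mul_pos hm₁p hm₁p) hm₂p, mul_pos (mul_pos hm₁p hm₂p) hm₂p,
        mul_pos (mul_pos hs hm₁p) hm₂p]
    have h0 : Polynomial.eval z (JE₀.map (fun x : ℝ => (x : ℂ))).charpoly = 0 := hz
    rw [key z] at h0
    rcases mul_eq_zero.1 h0 with h | h
    · rcases mul_eq_zero.1 h with h' | h'
      · have : z + (μ:ℂ) = 0 := by
          exact pow_eq_zero_iff (by norm_num) |>.1 h'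
        have hz' : z = -(μ:ℂ) := by linear_combination this
        rw [hz']
        simp only [Complex.neg_re, Complex.ofReal_re]
        linarith
      · have hz' : z = (α:ℂ) - ((μ:ℂ)+(θ:ℂ)) := by linear_combination h'
        rw [hz']
        simp only [Complex.sub_re, Complex.add_re, Complex.ofReal_re]
        linarith
    · exact my_cubic_neg_re _ _ _ hApos hBpos hCpos hABlt z h
  · -- instability
    intro hmax
    rcases lt_max_iff.1 hmax with hR | hr
    · -- R₁ > 1 : the cubic factor has a positive real root
      have hCneg : (μ+γ)*m₁*m₂ - β*γ*((1-p)*(m₂+ν*η) + ν*p*m₁) < 0 := by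
        nlinarith [hE, mul_pos (mul_pos hs hm₁p) hm₂p]
      obtain ⟨x, hx, hxeq⟩ := my_cubic_pos_root ((μ+γ) + m₁ + m₂)
        ((μ+γ)*m₁ + (μ+γ)*m₂ + m₁*m₂ - β*γ*((1-p) + ν*p))
        ((μ+γ)*m₁*m₂ - β*γ*((1-p)*(m₂+ν*η) + ν*p*m₁)) (by linarith) hCneg
      refine ⟨(x:ℂ), ?_, by simpa using hx⟩
      show Polynomial.eval _ _ = 0
      rw [key]
      have hcast : ((x:ℂ))^3 + (((μ+γ) + m₁ + m₂ : ℝ):ℂ)*((x:ℂ))^2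
          + (((μ+γ)*m₁ + (μ+γ)*m₂ + m₁*m₂ - β*γ*((1-p) + ν*p) : ℝ):ℂ)*((x:ℂ))
          + (((μ+γ)*m₁*m₂ - β*γ*((1-p)*(m₂+ν*η) + ν*p*m₁) : ℝ):ℂ) = 0 := by
        exact_mod_cast congrArg (fun t : ℝ => (t:ℂ)) hxeq
      rw [hcast, mul_zero]
    · -- α/(μ+θ) > 1 : the eigenvalue α − (μ+θ) is positive
      have hgt : 0 < α - (μ + θ) := by
        have h := (one_lt_div hμθ).1 hr
        linarith
      refine ⟨((α - (μ + θ) : ℝ):ℂ), ?_, by simpa using hgt⟩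
      show Polynomial.eval _ _ = 0
      rw [key]
      have hmid : ((α - (μ + θ) : ℝ):ℂ) - ((α:ℂ) - ((μ:ℂ)+(θ:ℂ))) = 0 := by
        push_cast; ring
      rw [hmid, mul_zero, zero_mul]
end

section
/- If α > μ + θ, then E₁ = (Π(μ+θ)/(μα), Π(α−(μ+θ))/(μα), 0, 0, 0, 0) is an equilibrium of the COVID-19 ODE system with positive S_a-component, and it is the unique equilibrium of the system with E = I = J = R = 0 and S_a > 0. -/
/-- The right-hand side vector field of the COVID-19 model. -/
noncomputable def covidRHS (Pi β ν α θ ε γ p η σ₁ σ₂ δ₁ δ₂ μ : ℝ)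
    (su sa e i j r : ℝ) : Fin 6 → ℝ :=
  ![Pi - β * (i + ν * j) * su / (su + sa + e + i + j + r)
      - α * sa * su / (su + sa + e + i + j + r) - μ * su + θ * sa,
    α * sa * su / (su + sa + e + i + j + r)
      - ε * β * (i + ν * j) * sa / (su + sa + e + i + j + r) - (μ + θ) * sa,
    β * (i + ν * j) * (su + ε * sa) / (su + sa + e + i + j + r) - (γ + μ) * e,
    (1 - p) * γ * e - (η + σ₁ + μ + δ₁) * i,
    p * γ * e + η * i - (σ₂ + μ + δ₂) * j,
    σ₁ * i + σ₂ * j - μ * r]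

set_option maxHeartbeats 1000000 in
/-- if `α > μ + θ`, then
`E₁ = (Π(μ+θ)/(μα), Π(α−(μ+θ))/(μα), 0, 0, 0, 0)` is an equilibrium of the
COVID-19 system with positive `S_a`-component, and it is the unique equilibrium
with `E = I = J = R = 0` and `S_a > 0`. -/
theorem covid_E1_equilibrium_unique
    (Pi β ν α θ ε γ p η σ₁ σ₂ δ₁ δ₂ μ : ℝ)
    (hPi : 0 < Pi) (hβ : 0 < β) (hν : 0 < ν) (hν1 : ν < 1) (hα : 0 < α)
    (hθ : 0 < θ) (hε : 0 < ε) (hε1 : ε < 1) (hγ : 0 < γ)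
    (hp : 0 < p) (hp1 : p < 1) (hη : 0 < η) (hσ₁ : 0 < σ₁) (hσ₂ : 0 < σ₂)
    (hδ₁ : 0 < δ₁) (hδ₂ : 0 < δ₂) (hμ : 0 < μ)
    (hαgt : α > μ + θ) :
    covidRHS Pi β ν α θ ε γ p η σ₁ σ₂ δ₁ δ₂ μ
        (Pi * (μ + θ) / (μ * α)) (Pi * (α - (μ + θ)) / (μ * α)) 0 0 0 0 = 0 ∧
    0 < Pi * (α - (μ + θ)) / (μ * α) ∧
    (∀ su sa : ℝ, 0 < sa →
      covidRHS Pi β ν α θ ε γ p η σ₁ σ₂ δ₁ δ₂ μ su sa 0 0 0 0 = 0 →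
      su = Pi * (μ + θ) / (μ * α) ∧ sa = Pi * (α - (μ + θ)) / (μ * α)) := by
  have hμα : μ * α ≠ 0 := by positivity
  have hsum : Pi * (μ + θ) / (μ * α) + Pi * (α - (μ + θ)) / (μ * α) = Pi / μ := by
    field_simp
    ring
  have hPiμ : Pi / μ ≠ 0 := by positivity
  refine ⟨?_, ?_, ?_⟩
  · funext k
    fin_cases k <;>
      simp only [covidRHS, Matrix.cons_val_zero, Matrix.cons_val_one, Matrix.head_cons,
        Matrix.cons_val', Matrix.empty_val', Matrix.cons_val_fin_one, _root_.Pi.zero_apply,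
        Matrix.cons_val_two, Matrix.cons_val_three, Matrix.tail_cons] <;>
      rw [show Pi * (μ + θ) / (μ * α) + Pi * (α - (μ + θ)) / (μ * α) + 0 + 0 + 0 + 0
        = Pi / μ by rw [← hsum]; ring] <;>
      field_simp <;> ring_nf <;> rfl
  · have : 0 < α - (μ + θ) := by linarith
    positivity
  · intro su sa hsa heq
    have h0 := congrFun heq 0
    have h1 := congrFun heq 1
    simp only [covidRHS, Matrix.cons_val_zero, Matrix.cons_val_one, Matrix.head_cons,
      _root_.Pi.zero_apply, add_zero, mul_zero, zero_mul, zero_div, zero_add, mul_comm] at h0 h1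
    -- h0 : Pi - 0 - α * sa * su / (su + sa) - μ * su + θ * sa = 0
    -- h1 : α * sa * su / (su + sa) - 0 - (μ + θ) * sa = 0
    have hne : su + sa ≠ 0 := by
      intro h
      rw [h] at h1
      simp at h1
      rcases h1 with h'' | h'' <;> linarith
    have hdiv0 : su * (α * sa) / (su + sa) = sa * (μ + θ) := by linarith
    have key : su * (α * sa) = sa * (μ + θ) * (su + sa) := by
      rw [div_eq_iff hne] at hdiv0; exact hdiv0
    have hαsu : α * su = (μ + θ) * (su + sa) := by
      have hprod : (α * su - (μ + θ) * (su + sa)) * sa = 0 := by linear_combination key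
      rcases mul_eq_zero.1 hprod with h'' | h''
      · linarith
      · linarith
    have hdiv : su * (α * sa) / (su + sa) = sa * (μ + θ) := by
      rw [div_eq_iff hne]; linear_combination key
    have hsum2 : μ * (su + sa) = Pi := by
      rw [hdiv] at h0; nlinarith [h0]
    have hsu : su = Pi * (μ + θ) / (μ * α) := by
      field_simp
      nlinarith [hαsu, hsum2]
    refine ⟨hsu, ?_⟩
    have hsa' : sa = Pi / μ - su := by
      have : μ * sa = Pi - μ * su := by linarith
      field_simp at this ⊢
      linarith
    rw [hsa', hsu]
    field_simp
end

section
/- For the 3×3 matrices F = [[0, βm₃, νβm₃], [0,0,0], [0,0,0]] and V = [[γ+μ, 0, 0], [−(1−p)γ, m₁, 0], [−pγ, −η, m₂]], the matrix V is invertible and the spectral radius (dominant eigenvalue) of FV⁻¹ equals R₀ = (m₃βγ/(m₂(μ+γ)))·[(1−p)(ην+m₂)/m₁ + pν]. -/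
open Polynomial Matrix

lemma charpoly_row3 (a b c : ℂ) :
    (!![a, b, c; 0, 0, 0; 0, 0, 0] : Matrix (Fin 3) (Fin 3) ℂ).charpoly
      = (X - C a) * X * X := by
  rw [Matrix.charpoly, Matrix.det_fin_three]
  simp [charmatrix_apply_eq, charmatrix_apply_ne, Matrix.charmatrix_apply,
    Matrix.vecHead, Matrix.vecTail]

/-- for the next-generation matrices `F` and `V`, the matrix `V`
is invertible and the spectral radius (dominant eigenvalue) of `F V⁻¹` equals
`R₀ = (m₃βγ/(m₂(μ+γ)))·[(1−p)(ην+m₂)/m₁ + pν]`: `R₀` is an eigenvalue of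
`F V⁻¹` and every complex eigenvalue has modulus at most `R₀`. -/
theorem covid_next_generation_spectral_radius
    (β ν α θ ε γ p η σ₁ σ₂ δ₁ δ₂ μ : ℝ)
    (hβ : 0 < β) (hν : 0 < ν) (hν1 : ν < 1) (hα : 0 < α) (hθ : 0 < θ)
    (hε : 0 < ε) (hε1 : ε < 1) (hγ : 0 < γ)
    (hp : 0 < p) (hp1 : p < 1) (hη : 0 < η) (hσ₁ : 0 < σ₁) (hσ₂ : 0 < σ₂)
    (hδ₁ : 0 < δ₁) (hδ₂ : 0 < δ₂) (hμ : 0 < μ) (hαgt : α > μ + θ)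
    (m₁ m₂ m₃ R₀ : ℝ)
    (hm₁ : m₁ = η + σ₁ + μ + δ₁)
    (hm₂ : m₂ = σ₂ + μ + δ₂)
    (hm₃ : m₃ = ((θ + μ) + ε * (α - (θ + μ))) / α)
    (hR₀ : R₀ = (m₃ * β * γ / (m₂ * (μ + γ))) * ((1 - p) * (η * ν + m₂) / m₁ + p * ν))
    (F V : Matrix (Fin 3) (Fin 3) ℝ)
    (hF : F = !![0, β * m₃, ν * β * m₃; 0, 0, 0; 0, 0, 0])
    (hV : V = !![γ + μ, 0, 0; -(1 - p) * γ, m₁, 0; -p * γ, -η, m₂]) :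
    IsUnit V.det ∧
    ((F * V⁻¹).map (fun x : ℝ => (x : ℂ))).charpoly.IsRoot (R₀ : ℂ) ∧
    (∀ z : ℂ, ((F * V⁻¹).map (fun x : ℝ => (x : ℂ))).charpoly.IsRoot z →
      ‖z‖ ≤ R₀) := by
  have hm₁pos : 0 < m₁ := by rw [hm₁]; positivity
  have hm₂pos : 0 < m₂ := by rw [hm₂]; positivity
  have hm₃pos : 0 < m₃ := by
    rw [hm₃]
    have : 0 < α - (θ + μ) := by linarith
    positivity
  have hγμ : 0 < γ + μ := by positivity
  have hR₀pos : 0 < R₀ := by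
    rw [hR₀]
    have h1p : 0 < 1 - p := by linarith
    have : 0 < μ + γ := by positivity
    positivity
  have hdet : V.det = (γ + μ) * m₁ * m₂ := by
    rw [hV, Matrix.det_fin_three]; simp
  have hdetne : V.det ≠ 0 := by rw [hdet]; positivity
  set W : Matrix (Fin 3) (Fin 3) ℝ :=
    !![(γ + μ)⁻¹, 0, 0;
       (1 - p) * γ / (m₁ * (γ + μ)), m₁⁻¹, 0;
       (p * γ * m₁ + η * (1 - p) * γ) / (m₂ * m₁ * (γ + μ)), η / (m₁ * m₂), m₂⁻¹] with hW
  have hVW : V * W = 1 := by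
    rw [hV, hW, Matrix.mul_fin_three, Matrix.one_fin_three]
    ext i j
    fin_cases i <;> fin_cases j <;>
      simp [Matrix.vecHead, Matrix.vecTail] <;> field_simp <;> ring
  have hVinv : V⁻¹ = W := Matrix.inv_eq_right_inv hVW
  have ha : (F * V⁻¹) 0 0 = R₀ := by
    rw [hVinv, hF, hW]
    simp [Matrix.mul_apply, Fin.sum_univ_three]
    rw [hR₀]
    field_simp
    ring
  set b := (F * V⁻¹) 0 1 with hb
  set c := (F * V⁻¹) 0 2 with hc
  have hFW : F * V⁻¹ = !![R₀, b, c; 0, 0, 0; 0, 0, 0] := by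
    rw [← ha, hb, hc]
    conv_lhs => rw [hVinv, hF, hW, Matrix.mul_fin_three]
    rw [hVinv, hF, hW, Matrix.mul_fin_three]
    ext i j
    fin_cases i <;> fin_cases j <;> simp [Matrix.vecHead, Matrix.vecTail]
  have hmap : ((F * V⁻¹).map (fun x : ℝ => (x : ℂ)))
      = !![(R₀ : ℂ), (b : ℂ), (c : ℂ); 0, 0, 0; 0, 0, 0] := by
    rw [hFW]
    ext i j
    fin_cases i <;> fin_cases j <;> simp [Matrix.vecHead, Matrix.vecTail]
  have hcp : ((F * V⁻¹).map (fun x : ℝ => (x : ℂ))).charpoly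
      = (X - C (R₀ : ℂ)) * X * X := by
    rw [hmap, charpoly_row3]
  refine ⟨isUnit_iff_ne_zero.mpr hdetne, ?_, ?_⟩
  · rw [hcp]; simp [Polynomial.IsRoot]
  · intro z hz
    rw [hcp] at hz
    simp only [Polynomial.IsRoot, Polynomial.eval_mul, Polynomial.eval_sub,
      Polynomial.eval_X, Polynomial.eval_C, mul_eq_zero] at hz
    have hz0 : z = (R₀ : ℂ) ∨ z = 0 := by
      rcases hz with (h | h) | h
      · left; linear_combination h
      · right; exact h
      · right; exact h
    rcases hz0 with h | h <;> rw [h] <;> simp [abs_of_pos hR₀pos, le_of_lt hR₀pos]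
end

section
/- Suppose β > max{δ₁, δ₂/ν} and R₁ > 1. Then the COVID-19 ODE system has an awareness-free endemic equilibrium E₂ = (S_u*, 0, E*, I*, J*, R*) with all nonzero components positive, given by E* = Π(R₁ − 1)/((β−δ₁)m₄ + (βν−δ₂)m₅), I* = m₄E*, J* = m₅E*, R* = (σ₁m₄ + σ₂m₅)E*/μ, N* = (Π − δ₁m₄E* − δ₂m₅E*)/μ, λ* = β(I*+νJ*)/N*, S_u* = Π/(λ* + μ), and E* = λ*S_u*/(γ+μ); moreover E₂ is the unique equilibrium with S_a = 0 and E > 0. -/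
set_option maxHeartbeats 1000000


/-- if `β > max{δ₁, δ₂/ν}` and `R₁ > 1`, the COVID-19 system has
an awareness-free endemic equilibrium `E₂ = (S_u*, 0, E*, I*, J*, R*)` with all
nonzero components positive, given by the stated formulas; moreover it is the
unique equilibrium with `S_a = 0` and `E > 0`. -/
theorem covid_awareness_free_endemic_equilibrium
    (Pi β ν α θ ε γ p η σ₁ σ₂ δ₁ δ₂ μ : ℝ)
    (hPi : 0 < Pi) (hβ : 0 < β) (hν : 0 < ν) (hν1 : ν < 1) (hα : 0 < α)
    (hθ : 0 < θ) (hε : 0 < ε) (hε1 : ε < 1) (hγ : 0 < γ)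
    (hp : 0 < p) (hp1 : p < 1) (hη : 0 < η) (hσ₁ : 0 < σ₁) (hσ₂ : 0 < σ₂)
    (hδ₁ : 0 < δ₁) (hδ₂ : 0 < δ₂) (hμ : 0 < μ)
    (m₁ m₂ m₄ m₅ R₁ : ℝ)
    (hm₁ : m₁ = η + σ₁ + μ + δ₁)
    (hm₂ : m₂ = σ₂ + μ + δ₂)
    (hm₄ : m₄ = (1 - p) * γ / m₁)
    (hm₅ : m₅ = p * γ / m₂ + η * (1 - p) * γ / (m₁ * m₂))
    (hR₁ : R₁ = (β * γ / (m₂ * (μ + γ))) * ((1 - p) * (η * ν + m₂) / m₁ + p * ν))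
    (hβgt : max δ₁ (δ₂ / ν) < β) (hR₁gt : 1 < R₁)
    (Estar Istar Jstar Rstar Nstar lamstar Sustar : ℝ)
    (hEstar : Estar = Pi * (R₁ - 1) / ((β - δ₁) * m₄ + (β * ν - δ₂) * m₅))
    (hIstar : Istar = m₄ * Estar)
    (hJstar : Jstar = m₅ * Estar)
    (hRstar : Rstar = (σ₁ * m₄ * Estar + σ₂ * m₅ * Estar) / μ)
    (hNstar : Nstar = (Pi - δ₁ * m₄ * Estar - δ₂ * m₅ * Estar) / μ)
    (hlam : lamstar = β * (Istar + ν * Jstar) / Nstar)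
    (hSustar : Sustar = Pi / (lamstar + μ)) :
    covidRHS Pi β ν α θ ε γ p η σ₁ σ₂ δ₁ δ₂ μ Sustar 0 Estar Istar Jstar Rstar = 0 ∧
    0 < Sustar ∧ 0 < Estar ∧ 0 < Istar ∧ 0 < Jstar ∧ 0 < Rstar ∧
    Estar = lamstar * Sustar / (γ + μ) ∧
    (∀ su e i j r : ℝ, 0 < e →
      covidRHS Pi β ν α θ ε γ p η σ₁ σ₂ δ₁ δ₂ μ su 0 e i j r = 0 →
      su = Sustar ∧ e = Estar ∧ i = Istar ∧ j = Jstar ∧ r = Rstar) := by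
  subst hm₁ hm₂
  set m₁ : ℝ := η + σ₁ + μ + δ₁ with hm₁
  set m₂ : ℝ := σ₂ + μ + δ₂ with hm₂
  have hm₁pos : 0 < m₁ := by rw [hm₁]; positivity
  have hm₂pos : 0 < m₂ := by rw [hm₂]; positivity
  have hγμ : 0 < γ + μ := by positivity
  have h1p : 0 < 1 - p := by linarith
  have hm₄pos : 0 < m₄ := by rw [hm₄]; positivity
  have hm₅pos : 0 < m₅ := by rw [hm₅]; positivity
  have hβδ₁ : δ₁ < β := lt_of_le_of_lt (le_max_left _ _) hβgt
  have hβδ₂ : δ₂ < β * ν := by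
    have := lt_of_le_of_lt (le_max_right _ _) hβgt
    rw [div_lt_iff₀ hν] at this; linarith
  obtain ⟨D, hD⟩ : ∃ D : ℝ, D = (β - δ₁) * m₄ + (β * ν - δ₂) * m₅ := ⟨_, rfl⟩
  rw [← hD] at hEstar
  have hDpos : 0 < D := by
    have h1 : 0 < (β - δ₁) * m₄ := mul_pos (by linarith) hm₄pos
    have h2 : 0 < (β * ν - δ₂) * m₅ := mul_pos (by linarith) hm₅pos
    rw [hD]; linarith
  have hEpos : 0 < Estar := by
    rw [hEstar]; exact div_pos (mul_pos hPi (by linarith)) hDpos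
  have hIpos : 0 < Istar := by rw [hIstar]; exact mul_pos hm₄pos hEpos
  have hJpos : 0 < Jstar := by rw [hJstar]; exact mul_pos hm₅pos hEpos
  have hRpos : 0 < Rstar := by
    rw [hRstar]
    have h1 : 0 < σ₁ * m₄ * Estar + σ₂ * m₅ * Estar := by positivity
    positivity
  have hβm : β * (m₄ + ν * m₅) = (γ + μ) * R₁ := by
    rw [hm₄, hm₅, hR₁]
    field_simp
    ring
  have hm₁m₄ : m₁ * m₄ = (1 - p) * γ := by rw [hm₄]; field_simp
  have hm₂m₅ : m₂ * m₅ = p * γ + η * m₄ := by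
    rw [hm₅, hm₄]; field_simp
  have hcγ : δ₁ * m₄ + δ₂ * m₅ < γ := by
    have h2 : m₁ * m₂ * (δ₁ * m₄ + δ₂ * m₅)
        = δ₁ * ((1-p)*γ) * m₂ + δ₂ * (p * γ * m₁ + η * ((1-p)*γ)) := by
      linear_combination (m₂ * δ₁ + δ₂ * η) * hm₁m₄ + (δ₂ * m₁) * hm₂m₅
    have h4 : m₁ * m₂ * γ - (δ₁ * ((1-p)*γ) * m₂ + δ₂ * (p * γ * m₁ + η * ((1-p)*γ)))
        = γ * (1-p) * (η * (σ₂ + μ)) + γ * (1-p) * ((σ₁ + μ) * m₂)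
          + γ * p * (m₁ * (σ₂ + μ)) := by
      rw [hm₁, hm₂]; ring
    have p1 : 0 < γ * (1-p) * (η * (σ₂ + μ)) := by positivity
    have p2 : 0 < γ * (1-p) * ((σ₁ + μ) * m₂) := by positivity
    have p3 : 0 < γ * p * (m₁ * (σ₂ + μ)) := by positivity
    have h3 : m₁ * m₂ * (δ₁ * m₄ + δ₂ * m₅) < m₁ * m₂ * γ := by
      rw [h2]; linarith
    exact lt_of_mul_lt_mul_left h3 (le_of_lt (mul_pos hm₁pos hm₂pos))
  have hDR : D = (γ + μ) * R₁ - (δ₁ * m₄ + δ₂ * m₅) := by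
    rw [hD, ← hβm]; ring
  have hDE : D * Estar = Pi * (R₁ - 1) := by
    rw [hEstar]; field_simp
  have hμN : μ * Nstar = Pi - (δ₁ * m₄ + δ₂ * m₅) * Estar := by
    rw [hNstar]; field_simp; ring
  have hR₁pos : 0 < R₁ := by linarith
  have hNpos : 0 < Nstar := by
    have h : μ * Nstar * D = Pi * R₁ * ((γ + μ) - (δ₁ * m₄ + δ₂ * m₅)) := by
      rw [hμN]
      linear_combination Pi * hDR - (δ₁ * m₄ + δ₂ * m₅) * hDE
    have hpos : 0 < μ * Nstar * D := by
      rw [h]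
      have h5 : 0 < (γ + μ) - (δ₁ * m₄ + δ₂ * m₅) := by linarith
      positivity
    have hNe : Nstar = (μ * Nstar * D) / (μ * D) := by
      field_simp [hμ.ne', hDpos.ne']
    rw [hNe]; exact div_pos hpos (mul_pos hμ hDpos)
  have hN0 : Nstar ≠ 0 := ne_of_gt hNpos
  have hlamN : lamstar * Nstar = (γ + μ) * R₁ * Estar := by
    rw [hlam, hIstar, hJstar]
    field_simp
    linear_combination hβm
  have hlampos : 0 < lamstar := by
    have h : lamstar = ((γ + μ) * R₁ * Estar) / Nstar := by
      rw [← hlamN]; field_simp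
    rw [h]; exact div_pos (mul_pos (mul_pos hγμ hR₁pos) hEpos) hNpos
  have hlamμ : 0 < lamstar + μ := by linarith
  have hSuP : Sustar * (lamstar + μ) = Pi := by
    rw [hSustar]; field_simp
  have hSupos : 0 < Sustar := by rw [hSustar]; positivity
  have hEq3 : lamstar * Sustar = (γ + μ) * Estar := by
    have h : lamstar * Sustar * ((lamstar + μ) * Nstar) = (γ + μ) * Estar * ((lamstar + μ) * Nstar) := by
      have hexp : lamstar * Pi * Nstar = (γ + μ) * Estar * ((lamstar * Nstar) + μ * Nstar) := by
        linear_combination Pi * hlamN - (γ+μ) * Estar * hlamN - (γ+μ) * Estar * hμN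
          - (γ+μ) * Estar * hDE + (γ+μ) * Estar * Estar * hDR
      calc lamstar * Sustar * ((lamstar + μ) * Nstar)
          = lamstar * (Sustar * (lamstar + μ)) * Nstar := by ring
        _ = lamstar * Pi * Nstar := by rw [hSuP]
        _ = (γ + μ) * Estar * ((lamstar * Nstar) + μ * Nstar) := hexp
        _ = (γ + μ) * Estar * ((lamstar + μ) * Nstar) := by ring
    have hne : (lamstar + μ) * Nstar ≠ 0 := by positivity
    exact mul_right_cancel₀ hne h
  have hμSu : μ * Sustar = Pi - (γ + μ) * Estar := by
    linear_combination hSuP - hEq3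
  have hSum : Sustar + 0 + Estar + Istar + Jstar + Rstar = Nstar := by
    have hr : μ * Rstar = σ₁ * m₄ * Estar + σ₂ * m₅ * Estar := by
      rw [hRstar]; field_simp
    have h : μ * (Sustar + 0 + Estar + Istar + Jstar + Rstar) = μ * Nstar := by
      rw [hμN, hIstar, hJstar]
      linear_combination hμSu + hr + Estar * hm₁m₄ + Estar * hm₂m₅
    exact mul_left_cancel₀ (ne_of_gt hμ) h
  have hterm0 : β * (Istar + ν * Jstar) * Sustar / Nstar = lamstar * Sustar := by
    rw [hlam]; ring
  have hterm2 : β * (Istar + ν * Jstar) * (Sustar + ε * 0) / Nstar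
      = lamstar * (Sustar + ε * 0) := by
    rw [hlam]; ring
  refine ⟨?_, hSupos, hEpos, hIpos, hJpos, hRpos, ?_, ?_⟩
  · have comp0 : Pi - β * (Istar + ν * Jstar) * Sustar
        / (Sustar + 0 + Estar + Istar + Jstar + Rstar)
        - α * 0 * Sustar / (Sustar + 0 + Estar + Istar + Jstar + Rstar)
        - μ * Sustar + θ * 0 = 0 := by
      rw [hSum, hterm0]
      linear_combination -hEq3 - hμSu
    have comp1 : α * 0 * Sustar / (Sustar + 0 + Estar + Istar + Jstar + Rstar)
        - ε * β * (Istar + ν * Jstar) * 0 / (Sustar + 0 + Estar + Istar + Jstar + Rstar)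
        - (μ + θ) * 0 = 0 := by ring
    have comp2 : β * (Istar + ν * Jstar) * (Sustar + ε * 0)
        / (Sustar + 0 + Estar + Istar + Jstar + Rstar) - (γ + μ) * Estar = 0 := by
      rw [hSum, hterm2]
      linear_combination hEq3
    have comp3 : (1 - p) * γ * Estar - (η + σ₁ + μ + δ₁) * Istar = 0 := by
      rw [hIstar]
      linear_combination -Estar * hm₁m₄
    have comp4 : p * γ * Estar + η * Istar - (σ₂ + μ + δ₂) * Jstar = 0 := by
      rw [hIstar, hJstar]
      linear_combination -Estar * hm₂m₅
    have comp5 : σ₁ * Istar + σ₂ * Jstar - μ * Rstar = 0 := by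
      rw [hIstar, hJstar, hRstar]
      field_simp
      ring
    funext k
    fin_cases k
    · exact comp0
    · exact comp1
    · exact comp2
    · exact comp3
    · exact comp4
    · exact comp5
  · rw [hEq3]
    field_simp
  · intro su e i j r he h0
    have c0 : Pi - β * (i + ν * j) * su / (su + 0 + e + i + j + r)
        - α * 0 * su / (su + 0 + e + i + j + r) - μ * su + θ * 0 = 0 := congrFun h0 0
    have c2 : β * (i + ν * j) * (su + ε * 0) / (su + 0 + e + i + j + r)
        - (γ + μ) * e = 0 := congrFun h0 2
    have c3 : (1 - p) * γ * e - (η + σ₁ + μ + δ₁) * i = 0 := congrFun h0 3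
    have c4 : p * γ * e + η * i - (σ₂ + μ + δ₂) * j = 0 := congrFun h0 4
    have c5 : σ₁ * i + σ₂ * j - μ * r = 0 := congrFun h0 5
    have hi : i = m₄ * e := by
      have h : m₁ * i = m₁ * (m₄ * e) := by
        linear_combination -c3 - e * hm₁m₄
      exact mul_left_cancel₀ (ne_of_gt hm₁pos) h
    have hj : j = m₅ * e := by
      have h : m₂ * j = m₂ * (m₅ * e) := by
        linear_combination -c4 - e * hm₂m₅ + η * hi
      exact mul_left_cancel₀ (ne_of_gt hm₂pos) h
    have hr : μ * r = σ₁ * i + σ₂ * j := by linear_combination -c5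
    set S : ℝ := su + 0 + e + i + j + r with hS
    have hSne : S ≠ 0 := by
      intro h
      rw [h, div_zero, zero_sub, neg_eq_zero] at c2
      exact (mul_pos hγμ he).ne' c2
    have c2' : β * (i + ν * j) * su / S - (γ + μ) * e = 0 := by
      linear_combination c2
    have hc2' : β * (i + ν * j) * su = (γ + μ) * e * S := by
      field_simp [hSne] at c2'
      linear_combination c2'
    have hμsu : μ * su = Pi - (γ + μ) * e := by
      have hdiv : β * (i + ν * j) * su / S = (γ + μ) * e := by
        rw [hc2', mul_div_assoc, div_self hSne, mul_one]
      rw [hdiv] at c0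
      linear_combination -c0
    have hμS : μ * S = Pi - δ₁ * i - δ₂ * j := by
      rw [hS]
      linear_combination hμsu + hr - c3 - c4
    have hμS' : μ * S = Pi - (δ₁ * m₄ + δ₂ * m₅) * e := by
      rw [hμS, hi, hj]; ring
    have hRsu : R₁ * su = S := by
      have h1 : (γ + μ) * R₁ * e * su = (γ + μ) * e * S := by
        rw [← hc2', hi, hj]
        linear_combination -(e * su) * hβm
      have h2 : ((γ + μ) * e) * (R₁ * su) = ((γ + μ) * e) * S := by linear_combination h1
      exact mul_left_cancel₀ (by positivity) h2
    have hDe : D * e = Pi * (R₁ - 1) := by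
      linear_combination e * hDR + R₁ * hμsu - μ * hRsu - hμS'
    have heE : e = Estar := by
      have h : D * e = D * Estar := by rw [hDe, hDE]
      exact mul_left_cancel₀ (ne_of_gt hDpos) h
    refine ⟨?_, heE, ?_, ?_, ?_⟩
    · have h : μ * su = μ * Sustar := by rw [hμsu, hμSu, heE]
      exact mul_left_cancel₀ (ne_of_gt hμ) h
    · rw [hi, heE, ← hIstar]
    · rw [hj, heE, ← hJstar]
    · have h : μ * r = μ * Rstar := by
        rw [hr, hRstar, hi, hj, heE]
        field_simp
      exact mul_left_cancel₀ (ne_of_gt hμ) h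
end
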